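/- Let R be a ring and A an R-module admitting an ordinal-indexed filtration (A_α)_{α≤λ} by submodules which is increasing, continuous at limit ordinals (A_β = ∪_{α<β} A_α for every limit ordinal β ≤ λ), with A_0 = 0, A_λ = A, and such that A_{α+1}/A_α is a countably generated projective R-module for every α with α+1 ≤ λ. Then A is isomorphic to a direct sum of countably generated projective R-modules; in particular A is a projective R-module. -/

import Mathlib

universe u v

/-- Auxiliary splitting lemma: if `K' ≤ N` are submodules of `A` such that the quotient
`N ⧸ K'` is projective and countably generated, then `K'` has a complement `G` in `N`
which is projective and countably generated. -/
theorem stmt12_split {R : Type u} [Ring R] {A : Type v} [AddCommGroup A] [Module R A]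
    (N K' : Submodule R A) (hKN : K' ≤ N)
    [hp : Module.Projective R (↥N ⧸ Submodule.comap N.subtype K')]
    (hcg : ∃ s : Set (↥N ⧸ Submodule.comap N.subtype K'), s.Countable ∧ Submodule.span R s = ⊤) :
    ∃ G : Submodule R A, G ≤ N ∧ Disjoint K' G ∧ K' ⊔ G = N ∧
      Module.Projective R ↥G ∧ ∃ s : Set A, s.Countable ∧ Submodule.span R s = G := by
  classical
  set K : Submodule R ↥N := Submodule.comap N.subtype K' with hK
  obtain ⟨sec, hsec⟩ := Module.projective_lifting_property K.mkQ LinearMap.id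
    (Submodule.mkQ_surjective K)
  have hsec' : ∀ q, K.mkQ (sec q) = q := fun q => congrArg (· q) (congrArg DFunLike.coe hsec)
  refine ⟨(LinearMap.range sec).map N.subtype, Submodule.map_subtype_le _ _, ?_, ?_, ?_, ?_⟩
  · rw [Submodule.disjoint_def]
    rintro x hx1 ⟨y, ⟨q, rfl⟩, rfl⟩
    have hy : sec q ∈ K := by simpa [hK] using hx1
    have : K.mkQ (sec q) = 0 := (Submodule.Quotient.mk_eq_zero K).2 hy
    rw [hsec'] at this
    simp [this]
  · refine le_antisymm (sup_le hKN (Submodule.map_subtype_le _ _)) ?_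
    intro x hx
    set n : ↥N := ⟨x, hx⟩ with hn
    have hmem : n - sec (K.mkQ n) ∈ K := by
      rw [← Submodule.Quotient.mk_eq_zero K]
      have : K.mkQ (n - sec (K.mkQ n)) = 0 := by
        rw [map_sub, hsec', sub_self]
      simpa using this
    have h1 : (↑(n - sec (K.mkQ n)) : A) ∈ K' := hmem
    have h2 : (↑(sec (K.mkQ n)) : A) ∈ (LinearMap.range sec).map N.subtype :=
      ⟨sec (K.mkQ n), ⟨_, rfl⟩, rfl⟩
    have : x = ↑(n - sec (K.mkQ n)) + ↑(sec (K.mkQ n)) := by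
      push_cast
      simp [hn]
    rw [this]
    exact Submodule.add_mem_sup h1 h2
  · have hinj : Function.Injective sec := by
      intro a b hab
      have := hsec' a
      rw [hab, hsec'] at this
      exact this.symm
    exact Module.Projective.of_equiv
      ((LinearEquiv.ofInjective sec hinj).trans
        (Submodule.equivMapOfInjective N.subtype N.injective_subtype (LinearMap.range sec)))
  · obtain ⟨s, hsc, hss⟩ := hcg
    refine ⟨(N.subtype ∘ₗ sec) '' s, hsc.image _, ?_⟩
    rw [← Submodule.map_span, hss, Submodule.map_top, LinearMap.range_comp]

/-- if an `R`-module `A` is a direct transfinite extension of countably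
generated projective modules (i.e. it admits an increasing continuous ordinal-indexed
filtration starting at `0`, ending at `A`, with countably generated projective consecutive
quotients), then `A` is an (internal) direct sum of countably generated projective
submodules; in particular `A` is projective. -/
theorem stmt12 {R : Type u} [Ring R] {A : Type v} [AddCommGroup A] [Module R A]
    (lam : Ordinal) (F : Ordinal → Submodule R A)
    (hmono : ∀ α β, α ≤ β → β ≤ lam → F α ≤ F β)
    (h0 : F 0 = ⊥) (htop : F lam = ⊤)
    (hcont : ∀ β ≤ lam, Order.IsSuccLimit β → F β = ⨆ α < β, F α)
    (hproj : ∀ α, α + 1 ≤ lam →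
      Module.Projective R (↥(F (α + 1)) ⧸ Submodule.comap (F (α + 1)).subtype (F α)))
    (hcg : ∀ α, α + 1 ≤ lam →
      ∃ s : Set (↥(F (α + 1)) ⧸ Submodule.comap (F (α + 1)).subtype (F α)),
        s.Countable ∧ Submodule.span R s = ⊤) :
    (∃ (ι : Type v) (G : ι → Submodule R A),
      iSupIndep G ∧ (⨆ i, G i) = ⊤ ∧
      ∀ i, Module.Projective R ↥(G i) ∧
        ∃ s : Set A, s.Countable ∧ Submodule.span R s = G i) ∧
    Module.Projective R A := by
  classical
  have key : ∀ α, α + 1 ≤ lam → ∃ G : Submodule R A, G ≤ F (α+1) ∧ Disjoint (F α) G ∧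
      F α ⊔ G = F (α+1) ∧ Module.Projective R ↥G ∧
      ∃ s : Set A, s.Countable ∧ Submodule.span R s = G := by
    intro α hα
    haveI := hproj α hα
    exact stmt12_split (F (α+1)) (F α)
      (hmono α (α+1) (le_of_lt (lt_add_one α)) hα) (hcg α hα)
  set G : Ordinal → Submodule R A :=
    fun α => if h : α + 1 ≤ lam then (key α h).choose else ⊥ with hGdef
  have hGspec : ∀ α, α + 1 ≤ lam → G α ≤ F (α+1) ∧ Disjoint (F α) (G α) ∧
      F α ⊔ G α = F (α+1) ∧ Module.Projective R ↥(G α) ∧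
      ∃ s : Set A, s.Countable ∧ Submodule.span R s = G α := by
    intro α h
    have : G α = (key α h).choose := by rw [hGdef]; exact dif_pos h
    rw [this]
    exact (key α h).choose_spec
  have hGbot : ∀ α, ¬ (α + 1 ≤ lam) → G α = ⊥ := by
    intro α h; rw [hGdef]; exact dif_neg h
  have hlt_succ : ∀ α : Ordinal, α < lam → α + 1 ≤ lam := by
    intro α h
    rw [Ordinal.add_one_eq_succ]
    exact Order.succ_le_of_lt h
  -- Claim B : `F β` is the supremum of the earlier `G`'s
  have claimB : ∀ β, β ≤ lam → F β = ⨆ α, ⨆ _ : α < β, G α := by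
    intro β
    induction β using Ordinal.induction with
    | h β IH =>
      intro hβ
      rcases Ordinal.zero_or_succ_or_isSuccLimit β with h' | ⟨δ, rfl⟩ | hlim
      · subst h'
        rw [h0]
        refine le_antisymm bot_le ?_
        exact iSup_le fun α => iSup_le fun h => absurd h (fun h => not_lt_zero h)
      · rw [← Ordinal.add_one_eq_succ] at *
        have hδ : δ < δ + 1 := lt_add_one δ
        have hδlam : δ ≤ lam := le_of_lt (lt_of_lt_of_le hδ hβ)
        have h3 := (hGspec δ hβ).2.2.1
        rw [← h3, IH δ hδ hδlam]
        refine le_antisymm ?_ ?_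
        · refine sup_le ?_ ?_
          · exact iSup_le fun α => iSup_le fun h =>
              le_iSup_of_le α (le_iSup_of_le (lt_trans h hδ) le_rfl)
          · exact le_iSup_of_le δ (le_iSup_of_le hδ le_rfl)
        · refine iSup_le fun α => iSup_le fun h => ?_
          rcases lt_or_eq_of_le (Order.lt_succ_iff.mp (Ordinal.add_one_eq_succ δ ▸ h)) with h' | h'
          · exact le_sup_of_le_left (le_iSup_of_le α (le_iSup_of_le h' le_rfl))
          · subst h'; exact le_sup_right
      · rw [hcont β hβ hlim]
        refine le_antisymm ?_ ?_
        · refine iSup_le fun α => iSup_le fun h => ?_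
          rw [IH α h (le_of_lt (lt_of_lt_of_le h hβ))]
          exact iSup_le fun γ => iSup_le fun hγ =>
            le_iSup_of_le γ (le_iSup_of_le (lt_trans hγ h) le_rfl)
        · refine iSup_le fun γ => iSup_le fun hγ => ?_
          have hγ1 : γ + 1 < β := hlim.succ_lt hγ |>.trans_eq' (Ordinal.add_one_eq_succ γ)
          refine le_iSup_of_le (γ+1) (le_iSup_of_le hγ1 ?_)
          rw [IH (γ+1) hγ1 (le_of_lt (lt_of_lt_of_le hγ1 hβ))]
          exact le_iSup_of_le γ (le_iSup_of_le (lt_add_one γ) le_rfl)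
  -- Independence of the family `G`
  have hind : iSupIndep G := by
    set T : Ordinal → Ordinal → Submodule R A :=
      fun i γ => ⨆ β, ⨆ _ : β < γ ∧ β ≠ i, G β with hT
    have hTmono : ∀ i γ γ', γ ≤ γ' → T i γ ≤ T i γ' := by
      intro i γ γ' h
      exact iSup_le fun β => iSup_le fun hβ =>
        le_iSup_of_le β (le_iSup_of_le ⟨lt_of_lt_of_le hβ.1 h, hβ.2⟩ le_rfl)
    have hTleF : ∀ i γ, γ ≤ lam → T i γ ≤ F γ := by
      intro i γ hγ
      rw [claimB γ hγ]
      exact iSup_le fun β => iSup_le fun hβ => le_iSup_of_le β (le_iSup_of_le hβ.1 le_rfl)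
    have claimD : ∀ γ, γ ≤ lam → ∀ i, i < γ → Disjoint (G i) (T i γ) := by
      intro γ
      induction γ using Ordinal.induction with
      | h γ IH =>
        intro hγ i hi
        rcases Ordinal.zero_or_succ_or_isSuccLimit γ with h' | ⟨δ, rfl⟩ | hlim
        · subst h'; exact absurd hi (fun h => not_lt_zero h)
        · rw [← Ordinal.add_one_eq_succ] at *
          have hδlam : δ ≤ lam := le_of_lt (lt_of_lt_of_le (lt_add_one δ) hγ)
          have hdisjFG : Disjoint (F δ) (G δ) := (hGspec δ hγ).2.1
          rcases lt_or_eq_of_le (Order.lt_succ_iff.mp (Ordinal.add_one_eq_succ δ ▸ hi))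
            with h' | h'
          · -- case `i < δ`
            have h1 : Disjoint (G i) (T i δ) := IH δ (lt_add_one δ) hδlam i h'
            have h2 : Disjoint (G i ⊔ T i δ) (G δ) := by
              refine hdisjFG.mono_left (sup_le ?_ (hTleF i δ hδlam))
              exact le_trans (hGspec i (hlt_succ i (lt_of_lt_of_le h' hδlam))).1
                (hmono (i+1) δ
                  (by rw [Ordinal.add_one_eq_succ]; exact Order.succ_le_of_lt h') hδlam)
            have h3 : Disjoint (G i) (T i δ ⊔ G δ) :=
              h1.disjoint_sup_right_of_disjoint_sup_left h2
            refine h3.mono_right ?_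
            refine iSup_le fun β => iSup_le fun hβ => ?_
            rcases lt_or_eq_of_le (Order.lt_succ_iff.mp (Ordinal.add_one_eq_succ δ ▸ hβ.1))
              with h'' | h''
            · exact le_sup_of_le_left (le_iSup_of_le β (le_iSup_of_le ⟨h'', hβ.2⟩ le_rfl))
            · subst h''; exact le_sup_right
          · -- case `i = δ`
            subst h'
            refine hdisjFG.symm.mono_right (le_trans ?_ (hTleF i i hδlam))
            refine iSup_le fun β => iSup_le fun hβ => ?_
            have hβi : β < i := lt_of_le_of_ne
              (Order.lt_succ_iff.mp (Ordinal.add_one_eq_succ i ▸ hβ.1)) hβ.2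
            exact le_iSup_of_le β (le_iSup_of_le ⟨hβi, hβ.2⟩ le_rfl)
        · -- limit case
          rw [Submodule.disjoint_def]
          intro x hx1 hx2
          have hpos : (0 : Ordinal) < γ := hlim.pos
          haveI : Nonempty (Set.Iio γ) := ⟨⟨0, hpos⟩⟩
          have hdir : Directed (· ≤ ·) (fun δ : Set.Iio γ => T i δ) := by
            intro a b
            rcases le_total (a : Ordinal) b with h | h
            · exact ⟨b, hTmono i a b h, le_rfl⟩
            · exact ⟨a, le_rfl, hTmono i b a h⟩
          have hTeq : T i γ ≤ ⨆ δ : Set.Iio γ, T i δ := by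
            refine iSup_le fun β => iSup_le fun hβ => ?_
            have hβ1 : β + 1 < γ := hlim.succ_lt hβ.1 |>.trans_eq' (Ordinal.add_one_eq_succ β)
            exact le_iSup_of_le ⟨β+1, hβ1⟩
              (le_iSup_of_le β (le_iSup_of_le ⟨lt_add_one β, hβ.2⟩ le_rfl))
          obtain ⟨⟨δ, hδ⟩, hxδ⟩ := (Submodule.mem_iSup_of_directed _ hdir).mp (hTeq hx2)
          set γ' : Ordinal := max δ i + 1 with hγ'
          have hγ'lt : γ' < γ := by
            rw [hγ', Ordinal.add_one_eq_succ]
            exact hlim.succ_lt (max_lt hδ hi)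
          have hiγ' : i < γ' := lt_of_le_of_lt (le_max_right δ i) (lt_add_one _)
          have hxγ' : x ∈ T i γ' :=
            hTmono i δ γ' (le_of_lt (lt_of_le_of_lt (le_max_left δ i) (lt_add_one _))) hxδ
          exact Submodule.disjoint_def.mp
            (IH γ' hγ'lt (le_of_lt (lt_of_lt_of_le hγ'lt hγ)) i hiγ') x hx1 hxγ'
    intro i
    by_cases hi : i < lam
    · refine (claimD lam le_rfl i hi).mono_right ?_
      refine iSup_le fun j => iSup_le fun hj => ?_
      by_cases hjl : j < lam
      · exact le_iSup_of_le j (le_iSup_of_le ⟨hjl, hj⟩ le_rfl)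
      · rw [hGbot j (fun h => hjl (lt_of_lt_of_le (lt_add_one j) h))]
        exact bot_le
    · rw [hGbot i (fun h => hi (lt_of_lt_of_le (lt_add_one i) h))]
      exact disjoint_bot_left
  -- the supremum of the `G`'s is everything
  have hsup : ⨆ α, G α = ⊤ := by
    refine top_unique ?_
    rw [← htop, claimB lam le_rfl]
    exact iSup_le fun α => iSup_le fun _ => le_iSup G α
  -- each `G α` is projective and countably generated
  have hprop : ∀ α, Module.Projective R ↥(G α) ∧
      ∃ s : Set A, s.Countable ∧ Submodule.span R s = G α := by
    intro α
    by_cases h : α + 1 ≤ lam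
    · exact ⟨(hGspec α h).2.2.2.1, (hGspec α h).2.2.2.2⟩
    · rw [hGbot α h]
      refine ⟨?_, ∅, Set.countable_empty, by simp⟩
      exact Module.Projective.of_basis
        (Module.Basis.empty (ι := Empty) (↥(⊥ : Submodule R A)))
  -- package everything via the range of `G`
  have hind' : iSupIndep ((↑) : Set.range G → Submodule R A) :=
    (sSupIndep_iff _).mp hind.sSupIndep_range
  have hsup' : ⨆ N : Set.range G, (N : Submodule R A) = ⊤ := by
    rw [iSup_range' (fun N : Submodule R A => N) G, hsup]
  have hprop' : ∀ N : Set.range G, Module.Projective R ↥(N : Submodule R A) ∧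
      ∃ s : Set A, s.Countable ∧ Submodule.span R s = (N : Submodule R A) := by
    rintro ⟨N, α, rfl⟩
    exact hprop α
  refine ⟨⟨Set.range G, (↑), hind', hsup', hprop'⟩, ?_⟩
  have hinternal := DirectSum.isInternal_submodule_of_iSupIndep_of_iSup_eq_top hind' hsup'
  haveI : ∀ N : Set.range G, Module.Projective R ↥(N : Submodule R A) :=
    fun N => (hprop' N).1
  haveI : Module.Projective R (DirectSum (Set.range G) fun N => ↥(N : Submodule R A)) := by
    delta DirectSum
    infer_instance
  exact Module.Projective.of_equiv
    (LinearEquiv.ofBijective (DirectSum.coeLinearMap _) hinternal)
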